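/- Let I be a map sending every probability measure on every finite set to a nonnegative real number which is invariant under bijections and satisfies I(p_1 q(1) ⊕ ⋯ ⊕ p_n q(n)) = I(p) + Σ_{i=1}^n p_i I(q(i)) for all probability measures p on {1,…,n} and probability measures q(1),…,q(n) on finite sets. Define φ(n) to be the value of I on the uniform probability measure on an n-element set. Then φ(nm) = φ(n) + φ(m) for all positive integers n, m. -/

import Mathlib

open scoped BigOperators Classical
open Filter Topology Real

/-- `p` is a probability measure on the finite set `X`. -/
def IsProb {X : Type} [Fintype X] (p : X → ℝ) : Prop :=
  (∀ i, 0 ≤ p i) ∧ ∑ i, p i = 1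

/-- `p` is a (nonnegative) measure on the finite set `X`. -/
def IsMeas {X : Type} [Fintype X] (p : X → ℝ) : Prop :=
  ∀ i, 0 ≤ p i

/-- `f` is a measure-preserving function from `(X, p)` to `(Y, q)`. -/
def IsMP {X Y : Type} [Fintype X] [Fintype Y] (p : X → ℝ) (q : Y → ℝ) (f : X → Y) : Prop :=
  ∀ j : Y, q j = ∑ i, if f i = j then p i else 0

/-- Shannon entropy (with the convention `0 * log 0 = 0`, automatic since `Real.log 0 = 0`). -/
noncomputable def shannon {X : Type} [Fintype X] (p : X → ℝ) : ℝ :=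
  -∑ i, p i * Real.log (p i)

/-- The convex combination `λ p ⊕ (1 - λ) q` on the disjoint union. -/
noncomputable def cvx (lam : ℝ) {X Y : Type} (p : X → ℝ) (q : Y → ℝ) : X ⊕ Y → ℝ :=
  Sum.elim (fun i => lam * p i) (fun j => (1 - lam) * q j)

/-- The direct sum `p ⊕ q` on the disjoint union. -/
def dsum {X Y : Type} (p : X → ℝ) (q : Y → ℝ) : X ⊕ Y → ℝ :=
  Sum.elim p q

/-- Extended Shannon entropy of a measure on a finite set. -/
noncomputable def shannonExt {X : Type} [Fintype X] (p : X → ℝ) : ℝ :=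
  if (∑ i, p i) = 0 then 0 else (∑ i, p i) * shannon (fun i => p i / ∑ j, p j)

/-- Tsallis entropy of order `α` of a probability measure. -/
noncomputable def tsallis (α : ℝ) {X : Type} [Fintype X] (p : X → ℝ) : ℝ :=
  if α = 1 then shannon p else (1 / (α - 1)) * (1 - ∑ i, p i ^ α)

/-- Extended Tsallis entropy of order `α` of a measure on a finite set. -/
noncomputable def tsallisExt (α : ℝ) {X : Type} [Fintype X] (p : X → ℝ) : ℝ :=
  if (∑ i, p i) = 0 then 0 else (∑ i, p i) ^ α * tsallis α (fun i => p i / ∑ j, p j)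

/-- For `I` bijection-invariant and strongly additive, the value `φ(n)` of `I` on
the uniform measure on an `n`-element set satisfies `φ(nm) = φ(n) + φ(m)`. -/
theorem stmt12
    (I : ∀ {X : Type} [Fintype X], (X → ℝ) → ℝ)
    (hnn : ∀ {X : Type} [Fintype X] (p : X → ℝ), IsProb p → 0 ≤ I p)
    (hbij : ∀ {X X' : Type} [Fintype X] [Fintype X'] (e : X ≃ X') (p : X → ℝ),
      IsProb p → I (fun j => p (e.symm j)) = I p)
    (hstrong : ∀ (n : ℕ) (Xs : Fin n → Type) [∀ i, Fintype (Xs i)]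
      (p : Fin n → ℝ) (q : ∀ i, Xs i → ℝ),
      IsProb p → (∀ i, IsProb (q i)) →
      I (fun x : Σ i, Xs i => p x.1 * q x.1 x.2) = I p + ∑ i, p i * I (q i)) :
    ∀ n m : ℕ, 0 < n → 0 < m →
      I (fun _ : Fin (n * m) => (1 : ℝ) / (n * m : ℕ))
        = I (fun _ : Fin n => (1 : ℝ) / n) + I (fun _ : Fin m => (1 : ℝ) / m) := by
  intro n m hn hm
  have hun : IsProb (fun _ : Fin n => (1 : ℝ) / n) := by
    constructor
    · intro i; positivity
    · simp [Finset.sum_const]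
      field_simp
  have hum : IsProb (fun _ : Fin m => (1 : ℝ) / m) := by
    constructor
    · intro i; positivity
    · simp [Finset.sum_const]
      field_simp
  have hs := hstrong n (fun _ => Fin m) (fun _ => (1 : ℝ) / n)
    (fun _ => fun _ : Fin m => (1 : ℝ) / m) hun (fun _ => hum)
  have hsum : (∑ i : Fin n, (1 : ℝ) / n * I (fun _ : Fin m => (1 : ℝ) / m))
      = I (fun _ : Fin m => (1 : ℝ) / m) := by
    rw [Finset.sum_const]
    simp
    field_simp
  rw [hsum] at hs
  have hcard : Fintype.card (Σ _ : Fin n, Fin m) = n * m := by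
    simp [Fintype.card_sigma]
  have e : (Σ _ : Fin n, Fin m) ≃ Fin (n * m) := Fintype.equivFinOfCardEq hcard
  have hprob : IsProb (fun x : Σ _ : Fin n, Fin m => (1 : ℝ) / n * (1 / m)) := by
    constructor
    · intro i; positivity
    · rw [Finset.sum_const, Finset.card_univ, hcard, nsmul_eq_mul]
      push_cast
      field_simp
  have hb := hbij e (fun x : Σ _ : Fin n, Fin m => (1 : ℝ) / n * (1 / m)) hprob
  have heq : (fun _ : Fin (n * m) => (1 : ℝ) / (n * m : ℕ))
      = (fun j : Fin (n * m) => (fun x : Σ _ : Fin n, Fin m => (1 : ℝ) / n * (1 / m)) (e.symm j)) := by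
    funext j
    push_cast
    field_simp
  rw [heq, hb, hs]
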